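/- Let d ∈ ℕ, let U be a real normed vector space, let O ⊆ ℝ^d (with the Euclidean inner product and standard orthonormal basis e₁, …, e_d) be an open set, let O^ℝ = {(y, p) ∈ O × ℝ : y + p e_i ∈ O for all i ∈ {1, …, d}}, let X : O → U and Z : O^ℝ → (ℝ^d →L U) be functions, let x ∈ O and r ∈ (0, ∞) satisfy {y ∈ ℝ^d : ‖y − x‖ < 2r} ⊆ O, and assume that for all (y, p) ∈ O × ℝ with ‖y − x‖² + p² < r² and all i ∈ {1, …, d} it holds that X(y + p e_i) − X(y) = p · Z(y, p) e_i. Then for every v ∈ ℝ^d with 0 < ‖v‖ < r it holds that ‖X(x + v) − X(x) − Z(x, 0) v‖_U ≤ ‖v‖ · ( ∑_{i=1}^d ‖ Z( x + ∑_{j=1}^{i−1} ⟨v, e_j⟩ e_j , ⟨v, e_i⟩ ) e_i − Z(x, 0) e_i ‖_U² )^{1/2}. -/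

import Mathlib

open scoped BigOperators RealInnerProductSpace

/-- The telescoping-sum/Cauchy–Schwarz estimate from the proof of Lemma 2.1 of the
paper: if `X : O → U` and `Z : O^ℝ → (ℝ^d →L U)` satisfy the difference-quotient
relation `X(y + p eᵢ) − X(y) = p · Z(y, p) eᵢ` for all `(y, p)` with
`‖y − x‖² + p² < r²` and all coordinate directions `eᵢ`, where the ball of radius
`2r` around `x` is contained in `O`, then for every `v` with `0 < ‖v‖ < r`,
`‖X(x + v) − X(x) − Z(x, 0) v‖
  ≤ ‖v‖ · ( ∑_{i=1}^d ‖ Z(x + ∑_{j<i} ⟨v,eⱼ⟩ eⱼ, ⟨v,eᵢ⟩) eᵢ − Z(x,0) eᵢ ‖² )^{1/2}`. -/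
theorem telescoping_difference_quotient_estimate
    (d : ℕ) {U : Type*} [NormedAddCommGroup U] [NormedSpace ℝ U]
    (O : Set (EuclideanSpace ℝ (Fin d))) (hO : IsOpen O)
    (X : EuclideanSpace ℝ (Fin d) → U)
    (Z : EuclideanSpace ℝ (Fin d) × ℝ → (EuclideanSpace ℝ (Fin d) →L[ℝ] U))
    (x : EuclideanSpace ℝ (Fin d)) (hx : x ∈ O)
    (r : ℝ) (hr : 0 < r)
    (hball : {y : EuclideanSpace ℝ (Fin d) | ‖y - x‖ < 2 * r} ⊆ O)
    (hdq : ∀ (y : EuclideanSpace ℝ (Fin d)) (p : ℝ), ‖y - x‖ ^ 2 + p ^ 2 < r ^ 2 →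
      ∀ i : Fin d,
        X (y + p • EuclideanSpace.single i (1 : ℝ)) - X y
          = p • Z (y, p) (EuclideanSpace.single i (1 : ℝ))) :
    ∀ v : EuclideanSpace ℝ (Fin d), 0 < ‖v‖ → ‖v‖ < r →
      ‖X (x + v) - X x - Z (x, 0) v‖
        ≤ ‖v‖ * Real.sqrt (∑ i : Fin d,
            ‖Z (x + ∑ j ∈ Finset.Iio i,
                  ⟪v, EuclideanSpace.single j (1 : ℝ)⟫ • EuclideanSpace.single j (1 : ℝ),
                ⟪v, EuclideanSpace.single i (1 : ℝ)⟫) (EuclideanSpace.single i (1 : ℝ))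
              - Z (x, 0) (EuclideanSpace.single i (1 : ℝ))‖ ^ 2) := by
  intro v hv0 hvr
  classical
  have hinner : ∀ j : Fin d, ⟪v, EuclideanSpace.single j (1 : ℝ)⟫ = v j := by
    intro j; rw [EuclideanSpace.inner_single_right]; simp
  -- partial sums
  set S : ℕ → EuclideanSpace ℝ (Fin d) :=
    fun k => x + ∑ j ∈ Finset.univ.filter (fun j : Fin d => (j : ℕ) < k), v j • EuclideanSpace.single j (1 : ℝ) with hS
  have hfilterIio : ∀ i : Fin d,
      Finset.univ.filter (fun j : Fin d => (j : ℕ) < (i : ℕ)) = Finset.Iio i := by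
    intro i; ext j
    simp only [Finset.mem_filter, Finset.mem_univ, true_and, Finset.mem_Iio, Fin.lt_def]
  have hSi : ∀ i : Fin d, S i = x + ∑ j ∈ Finset.Iio i, v j • EuclideanSpace.single j (1 : ℝ) := by
    intro i; rw [hS]; simp only [hfilterIio]
  have hS0 : S 0 = x := by simp [hS]
  have hvsum : ∑ i : Fin d, v i • EuclideanSpace.single i (1 : ℝ) = v := by
    have := (EuclideanSpace.basisFun (Fin d) ℝ).toBasis.sum_repr v
    simpa using this
  have hSd : S d = x + v := by
    simp only [hS]
    have : Finset.univ.filter (fun j : Fin d => (j : ℕ) < d) = Finset.univ := by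
      ext j; simp [j.isLt]
    rw [this, hvsum]
  -- norm squared of v
  have hnormsq : ∀ w : EuclideanSpace ℝ (Fin d), ‖w‖ ^ 2 = ∑ t : Fin d, (w t) ^ 2 := by
    intro w
    rw [EuclideanSpace.norm_eq, Real.sq_sqrt (by positivity)]
    simp [Real.norm_eq_abs, sq_abs]
  -- coordinates of S i - x
  have hScoord : ∀ (i : Fin d), ‖S i - x‖ ^ 2 = ∑ t ∈ Finset.Iio i, (v t) ^ 2 := by
    intro i
    have hc : ∀ t : Fin d, (S i - x) t = if t ∈ Finset.Iio i then v t else 0 := by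
      intro t
      rw [hSi]
      simp only [add_sub_cancel_left]
      rw [WithLp.ofLp_sum, Finset.sum_apply]
      by_cases ht : t ∈ Finset.Iio i
      · rw [Finset.sum_eq_single t]
        · simp [EuclideanSpace.single_apply, ht]
        · intro j hj hjt
          simp [PiLp.smul_apply, EuclideanSpace.single_apply, Ne.symm hjt]
        · intro h; exact absurd ht h
      · rw [if_neg ht]
        apply Finset.sum_eq_zero
        intro j hj
        have : j ≠ t := fun h => ht (h ▸ hj)
        simp [PiLp.smul_apply, EuclideanSpace.single_apply, Ne.symm this]
    rw [hnormsq]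
    rw [← Finset.sum_filter_add_sum_filter_not Finset.univ (· ∈ Finset.Iio i)]
    have h1 : ∑ t ∈ Finset.univ.filter (· ∈ Finset.Iio i), ((S i - x) t) ^ 2
        = ∑ t ∈ Finset.Iio i, (v t) ^ 2 := by
      rw [Finset.filter_mem_eq_inter, Finset.univ_inter]
      exact Finset.sum_congr rfl fun t ht => by rw [hc t, if_pos ht]
    have h2 : ∑ t ∈ Finset.univ.filter (¬ · ∈ Finset.Iio i), ((S i - x) t) ^ 2 = 0 := by
      apply Finset.sum_eq_zero
      intro t ht
      simp only [Finset.mem_filter] at ht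
      rw [hc t, if_neg ht.2]; ring
    rw [h1, h2, add_zero]
  -- the key bound to apply hdq
  have hsmall : ∀ i : Fin d, ‖S i - x‖ ^ 2 + (v i) ^ 2 < r ^ 2 := by
    intro i
    have h1 : ‖S i - x‖ ^ 2 + (v i) ^ 2 ≤ ‖v‖ ^ 2 := by
      rw [hScoord, hnormsq]
      have : ∑ t ∈ Finset.Iio i, (v t) ^ 2 + (v i) ^ 2 = ∑ t ∈ insert i (Finset.Iio i), (v t) ^ 2 := by
        rw [Finset.sum_insert (by simp)]; ring
      rw [this]
      exact Finset.sum_le_sum_of_subset_of_nonneg (Finset.subset_univ _)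
        (fun t _ _ => sq_nonneg _)
    calc ‖S i - x‖ ^ 2 + (v i) ^ 2 ≤ ‖v‖ ^ 2 := h1
      _ < r ^ 2 := by
        apply sq_lt_sq' _ hvr
        linarith [norm_nonneg v]
  -- telescoping
  have hstep : ∀ (k : ℕ) (hk : k < d),
      S (k + 1) = S k + v ⟨k, hk⟩ • EuclideanSpace.single (⟨k, hk⟩ : Fin d) (1 : ℝ) := by
    intro k hk
    simp only [hS]
    rw [add_assoc]
    congr 1
    have : Finset.univ.filter (fun j : Fin d => (j : ℕ) < k + 1)
        = insert ⟨k, hk⟩ (Finset.univ.filter (fun j : Fin d => (j : ℕ) < k)) := by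
      ext j
      simp only [Finset.mem_filter, Finset.mem_univ, true_and, Finset.mem_insert]
      constructor
      · intro h
        rcases Nat.lt_succ_iff_lt_or_eq.mp h with h | h
        · exact Or.inr h
        · exact Or.inl (Fin.ext h)
      · rintro (rfl | h)
        · exact Nat.lt_succ_self k
        · exact Nat.lt_succ_of_lt h
    rw [this, Finset.sum_insert (by simp), add_comm]
  have htel : X (x + v) - X x
      = ∑ i : Fin d, v i • Z (S i, v i) (EuclideanSpace.single i (1 : ℝ)) := by
    have := Finset.sum_range_sub (fun k => X (S k)) d
    rw [hS0, hSd] at this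
    rw [← this]
    rw [← Fin.sum_univ_eq_sum_range (fun k => X (S (k + 1)) - X (S k)) d]
    apply Finset.sum_congr rfl
    intro i _
    have hk : (i : ℕ) < d := i.isLt
    have h1 : S ((i : ℕ) + 1) = S i + v i • EuclideanSpace.single i (1 : ℝ) := by
      have := hstep i hk
      simpa using this
    rw [h1]
    have := hdq (S i) (v i) (hsmall i) i
    simpa using this
  have hZv : Z (x, 0) v = ∑ i : Fin d, v i • Z (x, 0) (EuclideanSpace.single i (1 : ℝ)) := by
    conv_lhs => rw [← hvsum]
    rw [map_sum]
    simp
  rw [htel, hZv, ← Finset.sum_sub_distrib]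
  have hsum : ∑ i : Fin d, (v i • Z (S i, v i) (EuclideanSpace.single i (1 : ℝ)) - v i • Z (x, 0) (EuclideanSpace.single i (1 : ℝ)))
      = ∑ i : Fin d, v i • (Z (S i, v i) (EuclideanSpace.single i (1 : ℝ)) - Z (x, 0) (EuclideanSpace.single i (1 : ℝ))) := by
    apply Finset.sum_congr rfl; intro i _; rw [smul_sub]
  rw [hsum]
  -- now Cauchy-Schwarz
  set Δ : Fin d → U := fun i => Z (S i, v i) (EuclideanSpace.single i (1 : ℝ)) - Z (x, 0) (EuclideanSpace.single i (1 : ℝ)) with hΔ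
  have h1 : ‖∑ i : Fin d, v i • Δ i‖ ≤ ∑ i : Fin d, |v i| * ‖Δ i‖ := by
    refine le_trans (norm_sum_le _ _) ?_
    apply Finset.sum_le_sum
    intro i _
    rw [norm_smul, Real.norm_eq_abs]
  have h2 : ∑ i : Fin d, |v i| * ‖Δ i‖
      ≤ Real.sqrt (∑ i : Fin d, |v i| ^ 2) * Real.sqrt (∑ i : Fin d, ‖Δ i‖ ^ 2) := by
    have hcs := Finset.sum_mul_sq_le_sq_mul_sq Finset.univ (fun i => |v i|) (fun i => ‖Δ i‖)
    have hnn : 0 ≤ ∑ i : Fin d, |v i| * ‖Δ i‖ :=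
      Finset.sum_nonneg fun i _ => mul_nonneg (abs_nonneg _) (norm_nonneg _)
    calc ∑ i : Fin d, |v i| * ‖Δ i‖
        = Real.sqrt ((∑ i : Fin d, |v i| * ‖Δ i‖) ^ 2) := by rw [Real.sqrt_sq hnn]
      _ ≤ Real.sqrt ((∑ i : Fin d, |v i| ^ 2) * ∑ i : Fin d, ‖Δ i‖ ^ 2) :=
          Real.sqrt_le_sqrt hcs
      _ = _ := Real.sqrt_mul (Finset.sum_nonneg fun i _ => sq_nonneg _) _
  have h3 : Real.sqrt (∑ i : Fin d, |v i| ^ 2) = ‖v‖ := by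
    rw [EuclideanSpace.norm_eq]
    simp [Real.norm_eq_abs]
  calc ‖∑ i : Fin d, v i • Δ i‖ ≤ ∑ i : Fin d, |v i| * ‖Δ i‖ := h1
    _ ≤ Real.sqrt (∑ i : Fin d, |v i| ^ 2) * Real.sqrt (∑ i : Fin d, ‖Δ i‖ ^ 2) := h2
    _ = ‖v‖ * Real.sqrt (∑ i : Fin d, ‖Δ i‖ ^ 2) := by rw [h3]
    _ = _ := by
        congr 2
        apply Finset.sum_congr rfl
        intro i _
        simp only [hΔ, hinner, hSi]
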